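/- Let M be a finite J-trivial monoid, e ∈ M an idempotent, and y ∈ M. Then the following three statements are equivalent: (1) e ≤_J y; (2) e·y = e; (3) y·e = e. -/
import Mathlib


/-- The `J`-preorder on a monoid: `x ≤_J y` iff `x = u * y * v` for some `u, v`. -/
def leJ {M : Type*} [Monoid M] (x y : M) : Prop := ∃ u v : M, x = u * y * v

/-- A monoid is `J`-trivial if `M x M = M y M` implies `x = y`. -/
def JTrivial (M : Type*) [Monoid M] : Prop :=
  ∀ x y : M, {z : M | ∃ u v : M, z = u * x * v} = {z : M | ∃ u v : M, z = u * y * v} → x = y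

/-- In a `J`-trivial monoid, `≤_J` is antisymmetric. -/
lemma leJ_antisymm {M : Type*} [Monoid M] (hJ : JTrivial M) {x y : M}
    (h1 : leJ x y) (h2 : leJ y x) : x = y := by
  obtain ⟨a, b, hab⟩ := h1
  obtain ⟨c, d, hcd⟩ := h2
  apply hJ
  ext z
  simp only [Set.mem_setOf_eq]
  constructor
  · rintro ⟨u, v, rfl⟩
    exact ⟨u * a, b * v, by rw [hab]; simp [mul_assoc]⟩
  · rintro ⟨u, v, rfl⟩
    exact ⟨u * c, d * v, by rw [hcd]; simp [mul_assoc]⟩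

/-- For an idempotent `e` in a finite `J`-trivial monoid and any `y`, the conditions
`e ≤_J y`, `e * y = e` and `y * e = e` are equivalent. -/
theorem idempotent_leJ_iff {M : Type*} [Monoid M] [Fintype M] (hJ : JTrivial M)
    (e y : M) (he : IsIdempotentElem e) :
    (leJ e y ↔ e * y = e) ∧ (leJ e y ↔ y * e = e) := by
  have main : leJ e y → (e * y = e ∧ y * e = e) := by
    rintro ⟨u, v, huv⟩
    have h1 : e = e * u * y := by
      apply leJ_antisymm hJ
      · exact ⟨1, v, by
          have : e * u * y * v = e := by rw [mul_assoc, mul_assoc, ← mul_assoc u, ← huv, he]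
          simp [this]⟩
      · exact ⟨1, u * y, by simp [mul_assoc]⟩
    have h2 : e = e * u := by
      apply leJ_antisymm hJ
      · exact ⟨1, y, by simpa using h1⟩
      · exact ⟨1, u, by simp⟩
    have hey : e * y = e := by rw [← h2] at h1; exact h1.symm
    have h1' : e = y * v * e := by
      apply leJ_antisymm hJ
      · exact ⟨u, 1, by
          have : u * (y * v * e) = e := by rw [← mul_assoc, ← mul_assoc, ← huv, he]
          simp [this]⟩
      · exact ⟨y * v, 1, by simp⟩
    have h2' : e = v * e := by
      apply leJ_antisymm hJ
      · exact ⟨y, 1, by simpa [mul_assoc] using h1'⟩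
      · exact ⟨v, 1, by simp⟩
    have hye : y * e = e := by rw [mul_assoc, ← h2'] at h1'; exact h1'.symm
    exact ⟨hey, hye⟩
  constructor
  · exact ⟨fun h => (main h).1, fun h => ⟨e, 1, by simp [h]⟩⟩
  · exact ⟨fun h => (main h).2, fun h => ⟨1, e, by simp [h]⟩⟩
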